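/- Fix a parameter set Θ and, for each dimension N, a family F_{N,ε} of Borel probability measures on ℝ^N satisfying: (i) if ν₁ ∈ F_{1,ε}, then the N-fold product measure ν₁ × ⋯ × ν₁ belongs to F_{N,ε}; and (ii) if ν_N ∈ F_{N,ε}, then the average of its one-dimensional coordinate marginals ν̄_N = N⁻¹ Σ_{i=1}^N ν_{N,i} belongs to F_{1,ε}. Let η be a separable denoiser, i.e. η(v;τ) = (η₁(v₁;τ), …, η₁(v_N;τ)) for a measurable scalar function η₁(·;τ): ℝ → ℝ, τ ∈ Θ. Then for every N, M(F_{N,ε}|η) = M(F_{1,ε}|η₁). -/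

import Mathlib

open MeasureTheory ProbabilityTheory ENNReal

noncomputable section

/-- The standard Gaussian measure `N(0, I_N)` on `ℝ^N`. -/
def stdGaussian (N : ℕ) : Measure (Fin N → ℝ) :=
  Measure.pi fun _ => gaussianReal 0 1

lemma map_eval_pi' {ι : Type*} [Fintype ι] {α : ι → Type*} [∀ i, MeasurableSpace (α i)]
    (μ : ∀ i, Measure (α i)) [∀ i, IsProbabilityMeasure (μ i)] (i : ι) :
    (Measure.pi μ).map (fun x => x i) = μ i := by
  classical
  ext s hs
  rw [Measure.map_apply (measurable_pi_apply i) hs]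
  have : (fun x : ∀ j, α j => x i) ⁻¹' s =
      Set.pi Set.univ (Function.update (fun j => (Set.univ : Set (α j))) i s) := by
    exact Set.eval_preimage
  rw [this, Measure.pi_pi]
  rw [Finset.prod_eq_single i]
  · simp
  · intro j _ hj
    simp [Function.update_of_ne hj]
  · simp

section aux

variable {Θ : Type*} (η₁ : Θ → ℝ → ℝ)

/-- The 1-d squared-error integrand. -/
def G (τ : Θ) : ℝ × ℝ → ℝ≥0∞ := fun q => ENNReal.ofReal ((q.1 - η₁ τ (q.1 + q.2)) ^ 2)

lemma G_meas (hmeas : ∀ τ : Θ, Measurable (η₁ τ)) (τ : Θ) : Measurable (G η₁ τ) := by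
  apply Measurable.ennreal_ofReal
  exact (measurable_fst.sub ((hmeas τ).comp (measurable_fst.add measurable_snd))).pow_const 2

/-- Decomposition of the `N`-dimensional integral into the coordinate marginals. -/
lemma integral_decomp (hmeas : ∀ τ : Θ, Measurable (η₁ τ)) (τ : Θ) (N : ℕ)
    (ν : Measure (Fin N → ℝ)) [IsProbabilityMeasure ν] :
    ∫⁻ p, ENNReal.ofReal (∑ i, (p.1 i - η₁ τ (p.1 i + p.2 i)) ^ 2)
        ∂(ν.prod (stdGaussian N)) =
      ∑ i : Fin N, ∫⁻ q : ℝ × ℝ, G η₁ τ q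
        ∂((ν.map (fun x => x i)).prod (gaussianReal 0 1)) := by
  haveI : IsProbabilityMeasure (stdGaussian N) := by
    unfold _root_.stdGaussian; infer_instance
  have hπ : ∀ i : Fin N, Measurable
      (fun p : (Fin N → ℝ) × (Fin N → ℝ) => ((p.1 i, p.2 i) : ℝ × ℝ)) := fun i =>
    ((measurable_pi_apply i).comp measurable_fst).prodMk
      ((measurable_pi_apply i).comp measurable_snd)
  calc ∫⁻ p, ENNReal.ofReal (∑ i, (p.1 i - η₁ τ (p.1 i + p.2 i)) ^ 2)
        ∂(ν.prod (stdGaussian N))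
      = ∫⁻ p, ∑ i : Fin N, G η₁ τ (p.1 i, p.2 i) ∂(ν.prod (stdGaussian N)) := by
        apply lintegral_congr
        intro p
        exact ENNReal.ofReal_sum_of_nonneg (fun i _ => sq_nonneg _)
    _ = ∑ i : Fin N, ∫⁻ p, G η₁ τ (p.1 i, p.2 i) ∂(ν.prod (stdGaussian N)) := by
        apply lintegral_finset_sum
        intro i _
        exact (G_meas η₁ hmeas τ).comp (hπ i)
    _ = ∑ i : Fin N, ∫⁻ q : ℝ × ℝ, G η₁ τ q
        ∂((ν.map (fun x => x i)).prod (gaussianReal 0 1)) := by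
        apply Finset.sum_congr rfl
        intro i _
        have hmap : (ν.map (fun x => x i)).prod ((stdGaussian N).map (fun x => x i)) =
            Measure.map (Prod.map (fun x : Fin N → ℝ => x i) (fun x : Fin N → ℝ => x i))
              (ν.prod (stdGaussian N)) :=
          Measure.map_prod_map _ _ (measurable_pi_apply i) (measurable_pi_apply i)
        have hg : (stdGaussian N).map (fun x => x i) = gaussianReal 0 1 :=
          map_eval_pi' _ i
        rw [← hg, hmap, lintegral_map (G_meas η₁ hmeas τ)
          ((measurable_pi_apply i).prodMap (measurable_pi_apply i))]
        rfl

end aux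

/-- **Minimax MSE of a separable denoiser.**
If the family `F N` of probability measures on `ℝ^N` is closed under forming
products of a one-dimensional member (i), and the average of the coordinate
marginals of any member lies in the one-dimensional family (ii), then for any
separable denoiser `η(v;τ) = (η₁(v₁;τ),…,η₁(v_N;τ))` the minimax MSE in
dimension `N` equals the one-dimensional minimax MSE. -/
theorem separable_minimax_mse
    {Θ : Type*} (η₁ : Θ → ℝ → ℝ)
    (hmeas : ∀ τ : Θ, Measurable (η₁ τ))
    (F : (N : ℕ) → Set (Measure (Fin N → ℝ))) (F1 : Set (Measure ℝ))
    (hprob : ∀ N : ℕ, ∀ ν ∈ F N, IsProbabilityMeasure ν)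
    (hprob1 : ∀ ν ∈ F1, IsProbabilityMeasure ν)
    -- (i) products of a one-dimensional member belong to the `N`-dimensional family
    (hprod : ∀ (N : ℕ) (ν₁ : Measure ℝ), ν₁ ∈ F1 →
      Measure.pi (fun _ : Fin N => ν₁) ∈ F N)
    -- (ii) the average of the coordinate marginals belongs to the one-dimensional family
    (hmarg : ∀ (N : ℕ), 0 < N → ∀ ν ∈ F N,
      ((N : ℝ≥0∞)⁻¹ • ∑ i : Fin N, Measure.map (fun x => x i) ν) ∈ F1)
    (N : ℕ) (hN : 0 < N) :
    (N : ℝ≥0∞)⁻¹ *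
      ⨅ τ : Θ, ⨆ ν ∈ F N,
        ∫⁻ p, ENNReal.ofReal (∑ i, (p.1 i - η₁ τ (p.1 i + p.2 i)) ^ 2)
          ∂(ν.prod (stdGaussian N)) =
    ⨅ τ : Θ, ⨆ ν ∈ F1,
      ∫⁻ p : ℝ × ℝ, ENNReal.ofReal ((p.1 - η₁ τ (p.1 + p.2)) ^ 2)
        ∂(ν.prod (gaussianReal 0 1)) := by
  have hN0 : (N : ℝ≥0∞) ≠ 0 := by exact_mod_cast Nat.cast_ne_zero.mpr hN.ne'
  have hNtop : (N : ℝ≥0∞) ≠ ∞ := natCast_ne_top N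
  -- 1-d value functional
  set I : Θ → Measure ℝ → ℝ≥0∞ :=
    fun τ μ => ∫⁻ q : ℝ × ℝ, G η₁ τ q ∂(μ.prod (gaussianReal 0 1)) with hI
  -- key: for ν ∈ F N, the N-dim integral equals N * I τ ν̄
  have key : ∀ τ : Θ, ∀ ν ∈ F N,
      ∫⁻ p, ENNReal.ofReal (∑ i, (p.1 i - η₁ τ (p.1 i + p.2 i)) ^ 2)
        ∂(ν.prod (stdGaussian N)) =
      (N : ℝ≥0∞) * I τ ((N : ℝ≥0∞)⁻¹ • ∑ i : Fin N, Measure.map (fun x => x i) ν) := by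
    intro τ ν hν
    haveI := hprob N ν hν
    haveI : ∀ i : Fin N, IsProbabilityMeasure (ν.map (fun x => x i)) := fun i =>
      Measure.isProbabilityMeasure_map (measurable_pi_apply i).aemeasurable
    haveI : IsProbabilityMeasure
        ((N : ℝ≥0∞)⁻¹ • ∑ i : Fin N, Measure.map (fun x => x i) ν) :=
      hprob1 _ (hmarg N hN ν hν)
    rw [integral_decomp η₁ hmeas τ N ν]
    -- Tonelli on each side
    have htnl : ∀ μ : Measure ℝ, SFinite μ →
        I τ μ = ∫⁻ x, ∫⁻ y, G η₁ τ (x, y) ∂(gaussianReal 0 1) ∂μ := by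
      intro μ hsf
      exact lintegral_prod _ (G_meas η₁ hmeas τ).aemeasurable
    rw [htnl _ inferInstance]
    rw [lintegral_smul_measure, lintegral_finset_sum_measure]
    rw [smul_eq_mul, ← mul_assoc, ENNReal.mul_inv_cancel hN0 hNtop, one_mul]
    apply Finset.sum_congr rfl
    intro i _
    exact htnl _ inferInstance
  -- for ν₁ ∈ F1, the product measure gives N * I τ ν₁
  have keyprod : ∀ τ : Θ, ∀ ν₁ ∈ F1,
      ∫⁻ p, ENNReal.ofReal (∑ i, (p.1 i - η₁ τ (p.1 i + p.2 i)) ^ 2)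
        ∂((Measure.pi fun _ : Fin N => ν₁).prod (stdGaussian N)) =
      (N : ℝ≥0∞) * I τ ν₁ := by
    intro τ ν₁ hν₁
    haveI := hprob1 ν₁ hν₁
    haveI : IsProbabilityMeasure (Measure.pi fun _ : Fin N => ν₁) := inferInstance
    rw [integral_decomp η₁ hmeas τ N _]
    have : ∀ i : Fin N, (Measure.pi fun _ : Fin N => ν₁).map (fun x => x i) = ν₁ :=
      fun i => map_eval_pi' _ i
    simp only [this]
    rw [Finset.sum_const, Finset.card_univ, Fintype.card_fin, nsmul_eq_mul]
  -- sup over F N equals N * sup over F1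
  have hsup : ∀ τ : Θ,
      (⨆ ν ∈ F N, ∫⁻ p, ENNReal.ofReal (∑ i, (p.1 i - η₁ τ (p.1 i + p.2 i)) ^ 2)
        ∂(ν.prod (stdGaussian N))) = (N : ℝ≥0∞) * ⨆ μ ∈ F1, I τ μ := by
    intro τ
    apply le_antisymm
    · apply iSup₂_le
      intro ν hν
      rw [key τ ν hν]
      exact mul_le_mul_right (le_iSup₂ (f := fun μ _ => I τ μ) _ (hmarg N hN ν hν)) _
    · rw [ENNReal.mul_iSup]
      apply iSup_le
      intro μ
      rw [ENNReal.mul_iSup]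
      apply iSup_le
      intro hμ
      rw [← keyprod τ μ hμ]
      exact le_iSup₂ (f := fun ν _ => ∫⁻ p,
        ENNReal.ofReal (∑ i, (p.1 i - η₁ τ (p.1 i + p.2 i)) ^ 2)
          ∂(ν.prod (stdGaussian N))) _ (hprod N μ hμ)
  simp only [hsup]
  rw [ENNReal.mul_iInf_of_ne (ENNReal.inv_ne_zero.mpr hNtop) (ENNReal.inv_ne_top.mpr hN0)]
  simp only [← mul_assoc, ENNReal.inv_mul_cancel hN0 hNtop, one_mul]
  rfl
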